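/- arXiv:2605.05877 — 4 statements merged into one kernel-verified Lean document; each statement's English description precedes it below -/
import Mathlib

section
/- Let n ≥ 1 be an integer and β ≥ 0 a real number. Let μ be the mean-field Ising measure on Ω = {±1}ⁿ: μ(σ) = exp(β·M(σ)²/(2n))/Z where M(σ) = Σᵢ σᵢ and Z = Σ_{σ∈Ω} exp(β·M(σ)²/(2n)). For σ ∈ Ω and i ∈ [n], let σ^{⊕i} be σ with the i-th spin flipped, and define the single-site Glauber capacity c(σ, σ^{⊕i}) = (1/n)·μ(σ)·μ(σ^{⊕i})/(μ(σ) + μ(σ^{⊕i})). Define the projected measure μ̄(m) = Σ_{σ : M(σ) = m} μ(σ) and the projected capacity c̄(m, m+2) = Σ_{σ : M(σ) = m} Σ_{i : σᵢ = −1} c(σ, σ^{⊕i}). Then for every m with −n ≤ m ≤ n − 2 and m ≡ n (mod 2), c̄(m, m+2) ≥ (1/(2n))·min(μ̄(m), μ̄(m+2)). -/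
open Finset

noncomputable section

/-- Total magnetization of a spin configuration (`true` ↦ `+1`, `false` ↦ `−1`). -/
def mag (n : ℕ) (σ : Fin n → Bool) : ℤ := ∑ i, (if σ i then 1 else -1)

/-- The configuration `σ` with the `i`-th spin flipped. -/
def flipSpin (n : ℕ) (σ : Fin n → Bool) (i : Fin n) : Fin n → Bool :=
  Function.update σ i (!σ i)

/-- The mean-field Ising measure `μ_β(σ) = exp(β·M(σ)²/(2n)) / Z` on `{±1}ⁿ`. -/
def isingMu (n : ℕ) (β : ℝ) (σ : Fin n → Bool) : ℝ :=
  Real.exp (β * (mag n σ : ℝ) ^ 2 / (2 * n)) /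
    ∑ τ : Fin n → Bool, Real.exp (β * (mag n τ : ℝ) ^ 2 / (2 * n))

/-- The single-site Glauber capacity
`c(σ, σ^{⊕i}) = (1/n)·μ(σ)·μ(σ^{⊕i})/(μ(σ) + μ(σ^{⊕i}))`. -/
def glauberCap (n : ℕ) (β : ℝ) (σ : Fin n → Bool) (i : Fin n) : ℝ :=
  (1 / n) * (isingMu n β σ * isingMu n β (flipSpin n σ i)) /
    (isingMu n β σ + isingMu n β (flipSpin n σ i))

/-- The projected measure `μ̄(m) = Σ_{σ : M(σ) = m} μ(σ)`. -/
def projMu (n : ℕ) (β : ℝ) (m : ℤ) : ℝ :=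
  ∑ σ ∈ univ.filter (fun σ : Fin n → Bool => mag n σ = m), isingMu n β σ

/-- The projected capacity `c̄(m, m+2) = Σ_{σ : M(σ)=m} Σ_{i : σᵢ=−1} c(σ, σ^{⊕i})`. -/
def projCap (n : ℕ) (β : ℝ) (m : ℤ) : ℝ :=
  ∑ σ ∈ univ.filter (fun σ : Fin n → Bool => mag n σ = m),
    ∑ i ∈ univ.filter (fun i : Fin n => σ i = false), glauberCap n β σ i

/-- The value of the Ising measure as a function of the magnetization only. -/
def Fval (n : ℕ) (β : ℝ) (t : ℤ) : ℝ :=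
  Real.exp (β * (t : ℝ) ^ 2 / (2 * n)) /
    ∑ τ : Fin n → Bool, Real.exp (β * (mag n τ : ℝ) ^ 2 / (2 * n))

end

lemma isingMu_eq_F (n : ℕ) (β : ℝ) (σ : Fin n → Bool) :
    isingMu n β σ = Fval n β (mag n σ) := rfl

lemma Fval_pos (n : ℕ) (β : ℝ) (t : ℤ) : 0 < Fval n β t := by
  apply div_pos (Real.exp_pos _)
  exact Finset.sum_pos (fun _ _ => Real.exp_pos _) Finset.univ_nonempty

lemma flipSpin_flip_flip (n : ℕ) (σ : Fin n → Bool) (i : Fin n) :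
    flipSpin n (flipSpin n σ i) i = σ := by
  funext j
  by_cases h : j = i <;> simp [flipSpin, Function.update, h]

lemma flip_apply (n : ℕ) (σ : Fin n → Bool) (i : Fin n) :
    flipSpin n σ i i = !σ i := by
  simp [flipSpin]

lemma mag_flip_gen (n : ℕ) (σ : Fin n → Bool) (i : Fin n) :
    mag n (flipSpin n σ i) =
      mag n σ - (if σ i then 1 else -1) + (if !σ i then 1 else -1) := by
  unfold mag flipSpin
  rw [← Finset.add_sum_erase _ _ (Finset.mem_univ i),
      ← Finset.add_sum_erase _ (fun j => if σ j = true then (1 : ℤ) else -1)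
        (Finset.mem_univ i)]
  have hrest : ∑ j ∈ Finset.univ.erase i,
      (if Function.update σ i (!σ i) j = true then (1 : ℤ) else -1) =
      ∑ j ∈ Finset.univ.erase i, (if σ j = true then (1 : ℤ) else -1) := by
    apply Finset.sum_congr rfl
    intro j hj
    rw [Function.update_of_ne (Finset.mem_erase.mp hj).1]
  rw [hrest, Function.update_self]
  ring

lemma mag_flip (n : ℕ) (σ : Fin n → Bool) (i : Fin n) (h : σ i = false) :
    mag n (flipSpin n σ i) = mag n σ + 2 := by
  rw [mag_flip_gen, h]
  norm_num
  ring

lemma mag_flip_true (n : ℕ) (σ : Fin n → Bool) (i : Fin n) (h : σ i = true) :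
    mag n (flipSpin n σ i) = mag n σ - 2 := by
  rw [mag_flip_gen, h]
  norm_num
  ring

lemma cap_symm (n : ℕ) (β : ℝ) (σ : Fin n → Bool) (i : Fin n) :
    glauberCap n β (flipSpin n σ i) i = glauberCap n β σ i := by
  unfold glauberCap
  rw [flipSpin_flip_flip, mul_comm (isingMu n β (flipSpin n σ i)),
      add_comm (isingMu n β (flipSpin n σ i))]

lemma cap_eq (n : ℕ) (β : ℝ) (σ : Fin n → Bool) (i : Fin n) (m : ℤ)
    (hσ : mag n σ = m) (hi : σ i = false) :
    glauberCap n β σ i =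
      (1 / n) * (Fval n β m * Fval n β (m + 2)) / (Fval n β m + Fval n β (m + 2)) := by
  unfold glauberCap
  rw [isingMu_eq_F, isingMu_eq_F, mag_flip n σ i hi, hσ]

lemma core_ineq (a b : ℝ) (ha : 0 < a) (hb : 0 < b) : min a b / 2 ≤ a * b / (a + b) := by
  rcases le_total a b with h | h
  · rw [min_eq_left h, div_le_div_iff₀ (by norm_num) (by linarith)]
    nlinarith
  · rw [min_eq_right h, div_le_div_iff₀ (by norm_num) (by linarith)]
    nlinarith

lemma exists_false_spin (n : ℕ) (σ : Fin n → Bool) (m : ℤ) (hσ : mag n σ = m)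
    (hm : m < n) : ∃ i, σ i = false := by
  by_contra h
  push_neg at h
  have hall : ∀ i, σ i = true := fun i => by simpa using h i
  have hmag : mag n σ = n := by
    unfold mag
    have hterm : ∀ i ∈ Finset.univ, (if σ i = true then (1 : ℤ) else -1) = 1 :=
      fun i _ => by rw [hall i]; rfl
    rw [Finset.sum_congr rfl hterm]
    simp
  omega

lemma exists_true_spin (n : ℕ) (σ : Fin n → Bool) (m : ℤ) (hσ : mag n σ = m)
    (hm : -(n : ℤ) < m) : ∃ i, σ i = true := by
  by_contra h
  push_neg at h
  have hall : ∀ i, σ i = false := fun i => by simpa using h i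
  have hmag : mag n σ = -(n : ℤ) := by
    unfold mag
    have hterm : ∀ i ∈ Finset.univ, (if σ i = true then (1 : ℤ) else -1) = -1 :=
      fun i _ => by rw [hall i]; rfl
    rw [Finset.sum_congr rfl hterm]
    simp
  omega

/-- Rewriting the projected capacity as a sum over the upper level via the flip bijection. -/
lemma projCap_eq_upper (n : ℕ) (β : ℝ) (m : ℤ) :
    projCap n β m =
      ∑ τ ∈ univ.filter (fun τ : Fin n → Bool => mag n τ = m + 2),
        ∑ j ∈ univ.filter (fun j : Fin n => τ j = true), glauberCap n β τ j := by
  unfold projCap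
  rw [Finset.sum_sigma' (f := fun σ i => glauberCap n β σ i),
      Finset.sum_sigma' (f := fun σ i => glauberCap n β σ i)]
  refine Finset.sum_nbij' (fun p => ⟨flipSpin n p.1 p.2, p.2⟩)
    (fun p => ⟨flipSpin n p.1 p.2, p.2⟩) ?_ ?_ ?_ ?_ ?_
  · rintro ⟨σ, i⟩ hp
    simp only [Finset.mem_sigma, Finset.mem_filter, Finset.mem_univ, true_and] at hp ⊢
    obtain ⟨h1, h2⟩ := hp
    exact ⟨by rw [mag_flip n σ i h2, h1], by rw [flip_apply, h2]; rfl⟩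
  · rintro ⟨τ, j⟩ hp
    simp only [Finset.mem_sigma, Finset.mem_filter, Finset.mem_univ, true_and] at hp ⊢
    obtain ⟨h1, h2⟩ := hp
    refine ⟨by rw [mag_flip_true n τ j h2, h1]; ring, by rw [flip_apply, h2]; rfl⟩
  · rintro ⟨σ, i⟩ _
    simp [flipSpin_flip_flip]
  · rintro ⟨τ, j⟩ _
    simp [flipSpin_flip_flip]
  · rintro ⟨σ, i⟩ _
    exact (cap_symm n β σ i).symm

/-- Capacity lower bound for the projected chain of the mean-field Ising model:
`c̄(m, m+2) ≥ (1/(2n))·min(μ̄(m), μ̄(m+2))`. -/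
theorem projected_capacity_lower_bound (n : ℕ) (hn : 1 ≤ n) (β : ℝ) (hβ : 0 ≤ β)
    (m : ℤ) (h1 : -(n : ℤ) ≤ m) (h2 : m ≤ (n : ℤ) - 2) (h3 : m % 2 = (n : ℤ) % 2) :
    (1 / (2 * n)) * min (projMu n β m) (projMu n β (m + 2)) ≤ projCap n β m := by
  have hn0 : (0 : ℝ) < n := by exact_mod_cast hn
  set a := Fval n β m with hadef
  set b := Fval n β (m + 2) with hbdef
  have ha : 0 < a := Fval_pos n β m
  have hb : 0 < b := Fval_pos n β (m + 2)
  have hab0 : 0 < a + b := by linarith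
  have hc0 : 0 ≤ (1 / (n : ℝ)) * (a * b) / (a + b) := by positivity
  have hkey : (1 / (2 * (n : ℝ))) * min a b ≤ (1 / n) * (a * b) / (a + b) := by
    have h := core_ineq a b ha hb
    have h2 : (1 / (n : ℝ)) * (min a b / 2) ≤ (1 / n) * (a * b / (a + b)) :=
      mul_le_mul_of_nonneg_left h (by positivity)
    calc (1 / (2 * (n : ℝ))) * min a b = (1 / n) * (min a b / 2) := by ring
      _ ≤ (1 / n) * (a * b / (a + b)) := h2
      _ = (1 / n) * (a * b) / (a + b) := by ring
  rcases le_total a b with hab | hab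
  · -- min a b = a; bound via the lower level
    have hmain : (1 / (2 * (n : ℝ))) * projMu n β m ≤ projCap n β m := by
      unfold projMu projCap
      rw [Finset.mul_sum]
      apply Finset.sum_le_sum
      intro σ hσ
      rw [Finset.mem_filter] at hσ
      obtain ⟨i, hi⟩ := exists_false_spin n σ m hσ.2 (by omega)
      have hall : ∀ j ∈ univ.filter (fun j : Fin n => σ j = false),
          glauberCap n β σ j = (1 / n) * (a * b) / (a + b) := by
        intro j hj
        rw [Finset.mem_filter] at hj
        exact cap_eq n β σ j m hσ.2 hj.2
      rw [Finset.sum_congr rfl hall, Finset.sum_const, nsmul_eq_mul]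
      have hmem : i ∈ univ.filter (fun j : Fin n => σ j = false) := by
        simp [hi]
      have hcard : (1 : ℝ) ≤ (univ.filter (fun j : Fin n => σ j = false)).card := by
        have := Finset.card_pos.mpr ⟨i, hmem⟩
        exact_mod_cast this
      have hmu : isingMu n β σ = a := by rw [isingMu_eq_F, hσ.2]
      rw [hmu]
      calc (1 / (2 * (n : ℝ))) * a = (1 / (2 * (n : ℝ))) * min a b := by
            rw [min_eq_left hab]
        _ ≤ (1 / n) * (a * b) / (a + b) := hkey
        _ ≤ ((univ.filter (fun j : Fin n => σ j = false)).card : ℝ) *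
              ((1 / n) * (a * b) / (a + b)) := le_mul_of_one_le_left hc0 hcard
    calc (1 / (2 * (n : ℝ))) * min (projMu n β m) (projMu n β (m + 2))
        ≤ (1 / (2 * (n : ℝ))) * projMu n β m :=
          mul_le_mul_of_nonneg_left (min_le_left _ _) (by positivity)
      _ ≤ projCap n β m := hmain
  · -- min a b = b; bound via the upper level
    have hmain : (1 / (2 * (n : ℝ))) * projMu n β (m + 2) ≤ projCap n β m := by
      rw [projCap_eq_upper]
      unfold projMu
      rw [Finset.mul_sum]
      apply Finset.sum_le_sum
      intro τ hτ
      rw [Finset.mem_filter] at hτ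
      obtain ⟨j, hj⟩ := exists_true_spin n τ (m + 2) hτ.2 (by omega)
      have hall : ∀ k ∈ univ.filter (fun k : Fin n => τ k = true),
          glauberCap n β τ k = (1 / n) * (a * b) / (a + b) := by
        intro k hk
        rw [Finset.mem_filter] at hk
        rw [← cap_symm n β τ k]
        have hfalse : flipSpin n τ k k = false := by rw [flip_apply, hk.2]; rfl
        have hmagf : mag n (flipSpin n τ k) = m := by
          rw [mag_flip_true n τ k hk.2, hτ.2]; ring
        rw [cap_eq n β (flipSpin n τ k) k m hmagf hfalse]
      rw [Finset.sum_congr rfl hall, Finset.sum_const, nsmul_eq_mul]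
      have hmem : j ∈ univ.filter (fun k : Fin n => τ k = true) := by
        simp [hj]
      have hcard : (1 : ℝ) ≤ (univ.filter (fun k : Fin n => τ k = true)).card := by
        have := Finset.card_pos.mpr ⟨j, hmem⟩
        exact_mod_cast this
      have hmu : isingMu n β τ = b := by rw [isingMu_eq_F, hτ.2]
      rw [hmu]
      calc (1 / (2 * (n : ℝ))) * b = (1 / (2 * (n : ℝ))) * min a b := by
            rw [min_eq_right hab]
        _ ≤ (1 / n) * (a * b) / (a + b) := hkey
        _ ≤ ((univ.filter (fun k : Fin n => τ k = true)).card : ℝ) *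
              ((1 / n) * (a * b) / (a + b)) := le_mul_of_one_le_left hc0 hcard
    calc (1 / (2 * (n : ℝ))) * min (projMu n β m) (projMu n β (m + 2))
        ≤ (1 / (2 * (n : ℝ))) * projMu n β (m + 2) :=
          mul_le_mul_of_nonneg_left (min_le_right _ _) (by positivity)
      _ ≤ projCap n β m := hmain
end

section
/- Let n ≥ 1 be an integer and let Ω̄̄ = {m ∈ ℤ : 0 ≤ m ≤ n, m ≡ n (mod 2)}. Let π be a strictly positive probability vector on Ω̄̄ that is unimodal: there exists m* ∈ Ω̄̄ such that π(m) ≤ π(m+2) whenever m, m+2 ∈ Ω̄̄ with m+2 ≤ m*, and π(m+2) ≤ π(m) whenever m, m+2 ∈ Ω̄̄ with m ≥ m*. Let c assign to each edge {m, m+2} (m, m+2 ∈ Ω̄̄) a value with c(m, m+2) ≥ (1/(2n))·min(π(m), π(m+2)). Then for every f : Ω̄̄ → ℝ, Var_π[f] ≤ n³ · Σ_{m : m, m+2 ∈ Ω̄̄} c(m, m+2)·(f(m+2) − f(m))². -/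
open Finset

lemma abs_poincare (K : ℕ) (p : ℕ → ℝ) (hp : ∀ i ≤ K, 0 ≤ p i)
    (hsum : ∑ i ∈ range (K+1), p i = 1)
    (ks : ℕ) (hks : ks ≤ K)
    (hup : ∀ k, k + 1 ≤ ks → p k ≤ p (k+1))
    (hdown : ∀ k, ks ≤ k → k + 1 ≤ K → p (k+1) ≤ p k)
    (g : ℕ → ℝ) :
    (∑ i ∈ range (K+1), p i * g i ^ 2) - (∑ i ∈ range (K+1), p i * g i) ^ 2 ≤
      (K : ℝ) * (K+1) * ∑ k ∈ range K, min (p k) (p (k+1)) * (g (k+1) - g k) ^ 2 := by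
  set T := range (K+1) with hT
  -- monotonicity on each side of the peak
  have mono_up : ∀ a b, a ≤ b → b ≤ ks → p a ≤ p b := by
    intro a b hab hbks
    induction b with
    | zero => simp_all
    | succ b ih =>
      rcases Nat.lt_or_ge a (b+1) with h | h
      · exact le_trans (ih (Nat.lt_succ_iff.mp h) (le_trans (Nat.le_succ b) hbks)) (hup b hbks)
      · have : a = b + 1 := le_antisymm hab h
        simp [this]
  have mono_down' : ∀ d a, ks ≤ a → a + d ≤ K → p (a + d) ≤ p a := by
    intro d
    induction d with
    | zero => intro a _ _; simp
    | succ d ih =>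
      intro a ha hK
      have h1 : p (a + d + 1) ≤ p (a + d) := hdown (a + d) (by omega) (by omega)
      have h2 : a + (d + 1) = a + d + 1 := by omega
      rw [h2]
      exact le_trans h1 (ih a ha (by omega))
  have mono_down : ∀ a b, ks ≤ a → a ≤ b → b ≤ K → p b ≤ p a := by
    intro a b hksa hab hbK
    have : b = a + (b - a) := by omega
    rw [this]
    exact mono_down' (b - a) a hksa (by omega)
  -- valley bound
  have valley : ∀ i j k, i ≤ k → k ≤ j → j ≤ K → min (p i) (p j) ≤ p k := by
    intro i j k hik hkj hjK
    rcases Nat.le_total k ks with h | h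
    · exact le_trans (min_le_left _ _) (mono_up i k hik h)
    · exact le_trans (min_le_right _ _) (mono_down k j h hkj hjK)
  set F : ℕ → ℝ := fun k => min (p k) (p (k+1)) * (g (k+1) - g k) ^ 2 with hF
  have hFnn : ∀ k ∈ range K, 0 ≤ F k := by
    intro k hk
    simp only [mem_range] at hk
    have h1 : 0 ≤ p k := hp k (by omega)
    have h2 : 0 ≤ p (k+1) := hp (k+1) (by omega)
    positivity
  -- key per-pair bound (i ≤ j)
  have key : ∀ i j, j ≤ K → i ≤ j →
      p i * p j * (g i - g j) ^ 2 ≤ (K : ℝ) * ((p i + p j) * ∑ k ∈ range K, F k) := by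
    intro i j hjK hij
    have hpi : 0 ≤ p i := hp i (le_trans hij hjK)
    have hpj : 0 ≤ p j := hp j hjK
    have tel : g j - g i = ∑ k ∈ Finset.Ico i j, (g (k+1) - g k) := by
      rw [Finset.sum_Ico_eq_sub _ hij, Finset.sum_range_sub, Finset.sum_range_sub]; ring
    have sq : (g i - g j) ^ 2 ≤ (j - i : ℕ) * ∑ k ∈ Finset.Ico i j, (g (k+1) - g k) ^ 2 := by
      have := sq_sum_le_card_mul_sum_sq (s := Finset.Ico i j) (f := fun k => g (k+1) - g k)
      rw [Nat.card_Ico] at this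
      calc (g i - g j) ^ 2 = (∑ k ∈ Finset.Ico i j, (g (k+1) - g k)) ^ 2 := by
            rw [← tel]; ring
        _ ≤ _ := this
    calc p i * p j * (g i - g j) ^ 2
        ≤ p i * p j * ((j - i : ℕ) * ∑ k ∈ Finset.Ico i j, (g (k+1) - g k) ^ 2) := by
          apply mul_le_mul_of_nonneg_left sq (by positivity)
      _ = (j - i : ℕ) * ∑ k ∈ Finset.Ico i j, p i * p j * (g (k+1) - g k) ^ 2 := by
          simp only [Finset.mul_sum]
          exact Finset.sum_congr rfl (fun k _ => by ring)
      _ ≤ (K : ℝ) * ∑ k ∈ Finset.Ico i j, (p i + p j) * F k := by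
          apply mul_le_mul
          · have hji : (j - i : ℕ) ≤ K := by omega
            exact Nat.cast_le.mpr hji
          · apply Finset.sum_le_sum
            intro k hk
            simp only [Finset.mem_Ico] at hk
            have hv : min (p i) (p j) ≤ p k := valley i j k hk.1 (by omega) (by omega)
            have hv' : min (p i) (p j) ≤ p (k+1) := valley i j (k+1) (by omega) hk.2 hjK
            have h1 : p i * p j ≤ min (p i) (p j) * (p i + p j) := by
              rcases le_total (p i) (p j) with h | h
              · simp [min_eq_left h]; nlinarith
              · simp [min_eq_right h]; nlinarith
            have h2 : min (p i) (p j) * (p i + p j) ≤ min (p k) (p (k+1)) * (p i + p j) := by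
              apply mul_le_mul_of_nonneg_right (le_min hv hv') (by positivity)
            calc p i * p j * (g (k+1) - g k) ^ 2
                ≤ min (p k) (p (k+1)) * (p i + p j) * (g (k+1) - g k) ^ 2 := by
                  apply mul_le_mul_of_nonneg_right (le_trans h1 h2) (by positivity)
              _ = (p i + p j) * F k := by rw [hF]; ring
          · apply Finset.sum_nonneg
            intro k hk
            simp only [Finset.mem_Ico] at hk
            have := hFnn k (by simp only [mem_range]; omega)
            positivity
          · exact Nat.cast_nonneg _
      _ ≤ (K : ℝ) * ∑ k ∈ range K, (p i + p j) * F k := by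
          apply mul_le_mul_of_nonneg_left _ (Nat.cast_nonneg _)
          apply Finset.sum_le_sum_of_subset_of_nonneg
          · intro k hk; simp only [Finset.mem_Ico] at hk; simp only [mem_range]; omega
          · intro k hk _; exact mul_nonneg (by positivity) (hFnn k hk)
      _ = (K : ℝ) * ((p i + p j) * ∑ k ∈ range K, F k) := by rw [← Finset.mul_sum]
  -- variance identity
  have var_id : 2 * ((∑ i ∈ T, p i * g i ^ 2) - (∑ i ∈ T, p i * g i) ^ 2) =
      ∑ i ∈ T, ∑ j ∈ T, p i * p j * (g i - g j) ^ 2 := by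
    have expand : ∀ i j : ℕ, p i * p j * (g i - g j) ^ 2 =
        p i * g i ^ 2 * p j + p i * (p j * g j ^ 2) - 2 * (p i * g i) * (p j * g j) := by
      intros; ring
    simp only [expand]
    simp only [Finset.sum_sub_distrib, Finset.sum_add_distrib, ← Finset.mul_sum,
      ← Finset.sum_mul]
    rw [hsum]
    ring
  -- double sum bound
  have dbl : ∑ i ∈ T, ∑ j ∈ T, p i * p j * (g i - g j) ^ 2 ≤
      (K : ℝ) * ∑ i ∈ T, ∑ j ∈ T, (p i + p j) * ∑ k ∈ range K, F k := by
    rw [Finset.mul_sum]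
    apply Finset.sum_le_sum
    intro i hi
    rw [Finset.mul_sum]
    apply Finset.sum_le_sum
    intro j hj
    simp only [hT, mem_range] at hi hj
    rcases le_total i j with h | h
    · exact key i j (by omega) h
    · have := key j i (by omega) h
      calc p i * p j * (g i - g j) ^ 2 = p j * p i * (g j - g i) ^ 2 := by ring
        _ ≤ (K:ℝ) * ((p j + p i) * ∑ k ∈ range K, F k) := this
        _ = (K:ℝ) * ((p i + p j) * ∑ k ∈ range K, F k) := by ring
  have sums : ∑ i ∈ T, ∑ j ∈ T, (p i + p j) * ∑ k ∈ range K, F k =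
      2 * ((K : ℝ) + 1) * ∑ k ∈ range K, F k := by
    have inner : ∀ i ∈ T, ∑ j ∈ T, (p i + p j) * ∑ k ∈ range K, F k =
        ((K : ℝ) + 1) * (p i * ∑ k ∈ range K, F k) + ∑ k ∈ range K, F k := by
      intro i _
      simp only [add_mul, Finset.sum_add_distrib, Finset.sum_const, ← Finset.sum_mul, hsum,
        one_mul]
      rw [nsmul_eq_mul, hT, Finset.card_range]
      push_cast; ring
    rw [Finset.sum_congr rfl inner, Finset.sum_add_distrib, Finset.sum_const,
      ← Finset.mul_sum, ← Finset.sum_mul, hsum]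
    rw [nsmul_eq_mul, hT, Finset.card_range]
    push_cast; ring
  nlinarith [var_id, dbl, sums, Finset.sum_nonneg hFnn, sq_nonneg (K:ℝ)]

/-- Poincaré inequality with constant `n³` for a unimodal birth–death chain on the
folded magnetization space `{0 ≤ m ≤ n, m ≡ n (mod 2)}` with capacities bounded
below by `(1/(2n))·min(π(m), π(m+2))`. -/
theorem poincare_folded_birth_death (n : ℕ) (hn : 1 ≤ n)
    (S : Finset ℤ)
    (hS : S = (Finset.Icc (0 : ℤ) (n : ℤ)).filter (fun m => m % 2 = (n : ℤ) % 2))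
    (π : ℤ → ℝ) (hπpos : ∀ m ∈ S, 0 < π m) (hπsum : ∑ m ∈ S, π m = 1)
    (mstar : ℤ) (hmstar : mstar ∈ S)
    (hup : ∀ m, m ∈ S → m + 2 ∈ S → m + 2 ≤ mstar → π m ≤ π (m + 2))
    (hdown : ∀ m, m ∈ S → m + 2 ∈ S → mstar ≤ m → π (m + 2) ≤ π m)
    (c : ℤ → ℝ)
    (hc : ∀ m, m ∈ S → m + 2 ∈ S →
      (1 / (2 * n)) * min (π m) (π (m + 2)) ≤ c m)
    (f : ℤ → ℝ) :
    (∑ m ∈ S, π m * f m ^ 2) - (∑ m ∈ S, π m * f m) ^ 2 ≤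
      (n : ℝ) ^ 3 * ∑ m ∈ S.filter (fun m => m + 2 ∈ S),
        c m * (f (m + 2) - f m) ^ 2 := by
  set K : ℕ := n / 2 with hK
  set e : ℕ → ℤ := fun k => 2 * (k : ℤ) + (n : ℤ) % 2 with he
  have hnK : (n : ℤ) = 2 * (K : ℤ) + (n : ℤ) % 2 := by omega
  have hmem : ∀ m : ℤ, m ∈ S ↔ 0 ≤ m ∧ m ≤ (n : ℤ) ∧ m % 2 = (n : ℤ) % 2 := by
    intro m
    simp [hS, Finset.mem_filter, Finset.mem_Icc, and_assoc]
  have einj : ∀ k k' : ℕ, e k = e k' → k = k' := by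
    intro k k' h; simp only [he] at h; omega
  have eS : ∀ k, k ≤ K → e k ∈ S := by
    intro k hk
    rw [hmem]; simp only [he]; omega
  have hSimg : S = (range (K+1)).image e := by
    ext m
    simp only [Finset.mem_image, mem_range, hmem]
    constructor
    · intro ⟨h1, h2, h3⟩
      refine ⟨((m - (n:ℤ)%2)/2).toNat, by omega, by simp only [he]; omega⟩
    · rintro ⟨k, hk, rfl⟩
      simp only [he]; omega
  have hEimg : S.filter (fun m => m + 2 ∈ S) = (range K).image e := by
    ext m
    simp only [Finset.mem_image, mem_range, Finset.mem_filter, hmem]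
    constructor
    · intro ⟨⟨h1, h2, h3⟩, h4, h5, h6⟩
      refine ⟨((m - (n:ℤ)%2)/2).toNat, by omega, by simp only [he]; omega⟩
    · rintro ⟨k, hk, rfl⟩
      simp only [he]; omega
  set p : ℕ → ℝ := fun k => π (e k) with hp
  set g : ℕ → ℝ := fun k => f (e k) with hg
  have estep : ∀ k : ℕ, e (k + 1) = e k + 2 := by
    intro k; simp only [he]; push_cast; ring
  -- get the peak index
  obtain ⟨ks, hksK, hkse⟩ : ∃ ks, ks < K + 1 ∧ e ks = mstar := by
    have := hmstar
    rw [hSimg, Finset.mem_image] at this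
    obtain ⟨ks, h1, h2⟩ := this
    exact ⟨ks, mem_range.mp h1, h2⟩
  -- convert sums
  have conv : ∀ F : ℤ → ℝ, ∑ m ∈ S, F m = ∑ k ∈ range (K+1), F (e k) := by
    intro F
    rw [hSimg, Finset.sum_image (fun a _ b _ h => einj a b h)]
  have convE : ∀ F : ℤ → ℝ, ∑ m ∈ S.filter (fun m => m + 2 ∈ S), F m =
      ∑ k ∈ range K, F (e k) := by
    intro F
    rw [hEimg, Finset.sum_image (fun a _ b _ h => einj a b h)]
  have hpsum : ∑ i ∈ range (K+1), p i = 1 := by rw [← conv]; exact hπsum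
  have hppos : ∀ i ≤ K, 0 ≤ p i := fun i hi => (hπpos _ (eS i hi)).le
  have habs := abs_poincare K p hppos hpsum ks (by omega)
    (fun k hk => by
      have h1 : e k ∈ S := eS k (by omega)
      have h2 : e k + 2 ∈ S := by rw [← estep]; exact eS (k+1) (by omega)
      have h3 : e k + 2 ≤ mstar := by rw [← estep, ← hkse]; simp only [he]; omega
      have := hup (e k) h1 h2 h3
      simpa [hp, estep k] using this)
    (fun k hks hkK => by
      have h1 : e k ∈ S := eS k (by omega)
      have h2 : e k + 2 ∈ S := by rw [← estep]; exact eS (k+1) (by omega)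
      have h3 : mstar ≤ e k := by rw [← hkse]; simp only [he]; omega
      have := hdown (e k) h1 h2 h3
      simpa [hp, estep k] using this)
    g
  rw [conv (fun m => π m * f m ^ 2), conv (fun m => π m * f m),
    convE (fun m => c m * (f (m + 2) - f m) ^ 2)]
  refine le_trans habs ?_
  rw [Finset.mul_sum, Finset.mul_sum]
  apply Finset.sum_le_sum
  intro k hk
  simp only [mem_range] at hk
  have hn2 : 2 ≤ n := by omega
  have h1 : e k ∈ S := eS k (by omega)
  have h2 : e k + 2 ∈ S := by rw [← estep]; exact eS (k+1) (by omega)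
  have hcc := hc (e k) h1 h2
  have hmin : 0 ≤ min (π (e k)) (π (e k + 2)) :=
    le_min (hπpos _ h1).le (hπpos _ h2).le
  have hgf : g (k + 1) = f (e k + 2) := by rw [hg]; simp only [← estep k]
  have hpk1 : p (k + 1) = π (e k + 2) := by rw [hp]; simp only [← estep k]
  have hKn : 2 * (K : ℝ) ≤ n := by
    have : 2 * K ≤ n := by omega
    exact_mod_cast this
  have hnR : (2 : ℝ) ≤ n := by exact_mod_cast hn2
  have hnn : (0:ℝ) < n := by positivity
  have hK1 : (1 : ℝ) ≤ (K : ℝ) := by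
    have : 1 ≤ K := by omega
    exact_mod_cast this
  have hcoef : (K : ℝ) * ((K : ℝ) + 1) ≤ (n:ℝ)^3 * (1 / (2 * n)) := by
    rw [mul_one_div, le_div_iff₀ (by positivity)]
    have hKnn : (0:ℝ) ≤ 2 * (K:ℝ) := by positivity
    have hsq : (2*(K:ℝ)) * (2*(K:ℝ)) ≤ (n:ℝ) * (n:ℝ) := mul_le_mul hKn hKn hKnn hnn.le
    nlinarith [hKn, hK1, hnn, hsq, mul_le_mul_of_nonneg_left hsq hnn.le]
  have hsq : (0:ℝ) ≤ (g (k+1) - g k)^2 := sq_nonneg _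
  calc (K:ℝ) * ((K:ℝ)+1) * (min (p k) (p (k+1)) * (g (k + 1) - g k) ^ 2)
      ≤ ((n:ℝ)^3 * (1 / (2 * n))) * (min (p k) (p (k+1)) * (g (k + 1) - g k) ^ 2) := by
        apply mul_le_mul_of_nonneg_right hcoef
        apply mul_nonneg _ hsq
        exact le_min (hppos k (by omega)) (hppos (k+1) (by omega))
    _ = (n:ℝ)^3 * ((1 / (2 * n)) * min (π (e k)) (π (e k + 2)) * (f (e k + 2) - f (e k)) ^ 2) := by
        rw [hgf, hpk1]
        simp only [hp, hg]
        ring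
    _ ≤ (n:ℝ)^3 * (c (e k) * (f (e k + 2) - f (e k)) ^ 2) := by
        apply mul_le_mul_of_nonneg_left _ (by positivity)
        exact mul_le_mul_of_nonneg_right hcc (sq_nonneg _)
end

section
/- Let (Ω, E) be a finite graph, let {γ_{x→y}}_{x,y∈Ω} be a collection of directed walks in (Ω, E) with γ_{x→y} starting at x and ending at y, and for each pair let F_{x→y} : Ω × Ω → ℝ be the unit flow along γ_{x→y} (the antisymmetric function that, on each ordered pair (u,v) with {u,v} ∈ E, equals the number of steps of γ_{x→y} traversing u→v minus the number traversing v→u, and vanishes off E). Let D : Ω → ℝ satisfy Σ_{x∈Ω} D(x) = 0. Then there exist J : Ω × Ω → ℝ and j : Ω × Ω → ℝ such that: J is antisymmetric and vanishes off E; D(x) + Σ_{y∈Ω} J(x,y) = 0 for every x ∈ Ω; J = Σ_{x,y∈Ω} j(x,y)·F_{x→y}; j(x,y) ≥ 0 for all x,y; j(x,y) > 0 implies D(x) < 0 and D(y) > 0; the support of j has at most 2·|Ω| elements; and j(x,y) ≤ min(|D(x)|, |D(y)|) for all x,y. -/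
open Finset

set_option linter.unusedSectionVars false

section FluxAux

lemma fluxAux_interval_len (c d u v : ℝ) (hcd : c ≤ d) (huv : u ≤ v) :
    max 0 (min d v - max c u) = min d (max c v) - min d (max c u) := by
  simp only [min_def, max_def]
  split_ifs <;> linarith

lemma fluxAux_len_filter_cons {α : Type*} (p : α → Bool) (d : α) (l : List α) :
    ((List.filter p (d :: l)).length : ℝ)
      = (if p d then 1 else 0) + ((List.filter p l).length : ℝ) := by
  rw [List.filter_cons]; split_ifs <;> simp [add_comm]

lemma fluxAux_sum_filter_fst {Ω : Type*} [Fintype Ω] [DecidableEq Ω]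
    {G : SimpleGraph Ω} (l : List G.Dart) (u : Ω) :
    ∑ v : Ω, ((l.filter (fun d => d.fst = u ∧ d.snd = v)).length : ℝ)
      = ((l.filter (fun d => d.fst = u)).length : ℝ) := by
  induction l with
  | nil => simp
  | cons d l ih =>
    rw [fluxAux_len_filter_cons]
    calc ∑ v : Ω, ((List.filter (fun d => decide (d.fst = u ∧ d.snd = v)) (d :: l)).length : ℝ)
        = ∑ v : Ω, ((if v = d.snd then (if d.fst = u then (1:ℝ) else 0) else 0)
            + ((List.filter (fun d' => decide (d'.fst = u ∧ d'.snd = v)) l).length : ℝ)) := by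
          refine Finset.sum_congr rfl fun v _ => ?_
          rw [fluxAux_len_filter_cons]
          congr 1
          by_cases h1 : d.fst = u <;> by_cases h2 : v = d.snd <;>
            simp [h1, h2, eq_comm]
      _ = (if d.fst = u then (1:ℝ) else 0)
            + ((List.filter (fun d => decide (d.fst = u)) l).length : ℝ) := by
          rw [Finset.sum_add_distrib, ih, Finset.sum_ite_eq' Finset.univ d.snd]
          simp
    simp

lemma fluxAux_sum_filter_snd {Ω : Type*} [Fintype Ω] [DecidableEq Ω]
    {G : SimpleGraph Ω} (l : List G.Dart) (u : Ω) :
    ∑ v : Ω, ((l.filter (fun d => d.fst = v ∧ d.snd = u)).length : ℝ)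
      = ((l.filter (fun d => d.snd = u)).length : ℝ) := by
  induction l with
  | nil => simp
  | cons d l ih =>
    rw [fluxAux_len_filter_cons]
    calc ∑ v : Ω, ((List.filter (fun d => decide (d.fst = v ∧ d.snd = u)) (d :: l)).length : ℝ)
        = ∑ v : Ω, ((if v = d.fst then (if d.snd = u then (1:ℝ) else 0) else 0)
            + ((List.filter (fun d' => decide (d'.fst = v ∧ d'.snd = u)) l).length : ℝ)) := by
          refine Finset.sum_congr rfl fun v _ => ?_
          rw [fluxAux_len_filter_cons]
          congr 1
          by_cases h1 : d.snd = u <;> by_cases h2 : v = d.fst <;>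
            simp [h1, h2, eq_comm]
      _ = (if d.snd = u then (1:ℝ) else 0)
            + ((List.filter (fun d => decide (d.snd = u)) l).length : ℝ) := by
          rw [Finset.sum_add_distrib, ih, Finset.sum_ite_eq' Finset.univ d.fst]
          simp
    simp

lemma fluxAux_walk_count {Ω : Type*} [DecidableEq Ω] {G : SimpleGraph Ω} {x y : Ω}
    (w : G.Walk x y) (u : Ω) :
    ((w.darts.filter (fun d => d.fst = u)).length : ℝ)
      - ((w.darts.filter (fun d => d.snd = u)).length : ℝ)
      = (if x = u then 1 else 0) - (if y = u then 1 else 0) := by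
  induction w with
  | nil => simp
  | @cons a b c hadj p ih =>
    rw [SimpleGraph.Walk.darts_cons, fluxAux_len_filter_cons, fluxAux_len_filter_cons]
    have e1 : (SimpleGraph.Dart.mk (a, b) hadj).fst = a := rfl
    have e2 : (SimpleGraph.Dart.mk (a, b) hadj).snd = b := rfl
    rw [e1, e2]
    by_cases h1 : a = u <;> by_cases h2 : b = u <;>
      simp only [h1, h2, decide_true, decide_false, Bool.false_eq_true,
        if_true, if_false] at ih ⊢ <;>
      linarith

variable {Ω : Type*} [Fintype Ω] [DecidableEq Ω] {n : ℕ} (e : Ω ≃ Fin n)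

noncomputable def fluxAuxCum (a : Ω → ℝ) (k : ℕ) : ℝ :=
  ∑ x ∈ Finset.univ.filter (fun x => ((e x : ℕ) < k)), a x

lemma fluxAux_cum_zero (a : Ω → ℝ) : fluxAuxCum e a 0 = 0 := by simp [fluxAuxCum]

lemma fluxAux_cum_top (a : Ω → ℝ) : fluxAuxCum e a n = ∑ x, a x := by
  unfold fluxAuxCum
  congr 1
  refine Finset.filter_true_of_mem fun x _ => (e x).isLt

lemma fluxAux_cum_mono (a : Ω → ℝ) (ha : ∀ x, 0 ≤ a x) {k l : ℕ} (hkl : k ≤ l) :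
    fluxAuxCum e a k ≤ fluxAuxCum e a l := by
  refine Finset.sum_le_sum_of_subset_of_nonneg ?_ (fun x _ _ => ha x)
  intro x hx
  simp only [Finset.mem_filter, Finset.mem_univ, true_and] at *
  omega

lemma fluxAux_cum_succ (a : Ω → ℝ) (x : Ω) :
    fluxAuxCum e a ((e x : ℕ) + 1) = fluxAuxCum e a (e x) + a x := by
  unfold fluxAuxCum
  have : (Finset.univ.filter (fun x' => ((e x' : ℕ) < (e x : ℕ) + 1)))
      = insert x (Finset.univ.filter (fun x' => ((e x' : ℕ) < (e x : ℕ)))) := by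
    ext x'
    simp only [Finset.mem_filter, Finset.mem_univ, true_and, Finset.mem_insert]
    constructor
    · intro h
      rcases Nat.lt_succ_iff_lt_or_eq.mp h with h | h
      · exact Or.inr h
      · exact Or.inl (e.injective (Fin.val_injective h))
    · rintro (rfl | h) <;> omega
  rw [this, Finset.sum_insert (by simp)]
  ring

lemma fluxAux_telescope (h : ℕ → ℝ) :
    ∑ y : Ω, (h ((e y : ℕ) + 1) - h (e y)) = h n - h 0 := by
  rw [Equiv.sum_comp e (fun i : Fin n => h ((i : ℕ) + 1) - h (i : ℕ))]
  rw [Fin.sum_univ_eq_sum_range (fun i : ℕ => h (i + 1) - h i) n]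
  exact Finset.sum_range_sub h n

end FluxAux

/-- Flux construction via path decomposition: given a collection of directed walks
`γ_{x→y}` and `D : Ω → ℝ` summing to zero, there is an admissible flux `J` that
decomposes as a nonnegative combination of unit flows along the walks, with a
sparse transport plan bounded by the local mass changes. -/
theorem flux_construction_via_path_decomposition {Ω : Type*} [Fintype Ω]
    [DecidableEq Ω] (G : SimpleGraph Ω) [DecidableRel G.Adj]
    (γ : ∀ x y : Ω, G.Walk x y)
    (F : Ω → Ω → Ω → Ω → ℝ)
    (hF : ∀ x y u v : Ω, F x y u v =
      (((γ x y).darts.filter (fun d => d.fst = u ∧ d.snd = v)).length : ℝ) -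
      (((γ x y).darts.filter (fun d => d.fst = v ∧ d.snd = u)).length : ℝ))
    (D : Ω → ℝ) (hD : ∑ x, D x = 0) :
    ∃ (J : Ω → Ω → ℝ) (j : Ω → Ω → ℝ),
      (∀ u v, J u v = - J v u) ∧
      (∀ u v, ¬ G.Adj u v → J u v = 0) ∧
      (∀ x, D x + ∑ y, J x y = 0) ∧
      (∀ u v, J u v = ∑ x, ∑ y, j x y * F x y u v) ∧
      (∀ x y, 0 ≤ j x y) ∧
      (∀ x y, 0 < j x y → D x < 0 ∧ 0 < D y) ∧
      ((Finset.univ.filter (fun p : Ω × Ω => j p.1 p.2 ≠ 0)).card ≤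
        2 * Fintype.card Ω) ∧
      (∀ x y, j x y ≤ min |D x| |D y|) := by
  classical
  set n := Fintype.card Ω with hn
  let e : Ω ≃ Fin n := Fintype.equivFin Ω
  set a : Ω → ℝ := fun x => max (-D x) 0 with ha_def
  set b : Ω → ℝ := fun x => max (D x) 0 with hb_def
  have ha : ∀ x, 0 ≤ a x := fun x => le_max_right _ _
  have hb : ∀ x, 0 ≤ b x := fun x => le_max_right _ _
  have hab : ∀ x, a x - b x = - D x := by
    intro x
    simp only [ha_def, hb_def, max_def]
    split_ifs <;> linarith
  have hsum : ∑ x, a x = ∑ x, b x := by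
    have h1 : ∑ x, (a x - b x) = 0 := by
      calc ∑ x, (a x - b x) = ∑ x, (- D x) := Finset.sum_congr rfl fun x _ => hab x
        _ = - ∑ x, D x := by rw [Finset.sum_neg_distrib]
        _ = 0 := by rw [hD]; ring
    rw [Finset.sum_sub_distrib] at h1
    linarith
  set A : ℕ → ℝ := fluxAuxCum e a with hA_def
  set B : ℕ → ℝ := fluxAuxCum e b with hB_def
  have hA_succ : ∀ x, A ((e x : ℕ) + 1) = A (e x) + a x := fluxAux_cum_succ e a
  have hB_succ : ∀ y, B ((e y : ℕ) + 1) = B (e y) + b y := fluxAux_cum_succ e b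
  have hA_mono : ∀ {k l : ℕ}, k ≤ l → A k ≤ A l := fun h => fluxAux_cum_mono e a ha h
  have hB_mono : ∀ {k l : ℕ}, k ≤ l → B k ≤ B l := fun h => fluxAux_cum_mono e b hb h
  have hA0 : A 0 = 0 := fluxAux_cum_zero e a
  have hB0 : B 0 = 0 := fluxAux_cum_zero e b
  have hAtop : A n = ∑ x, a x := fluxAux_cum_top e a
  have hBtop : B n = ∑ x, b x := fluxAux_cum_top e b
  have hABtop : A n = B n := by rw [hAtop, hBtop, hsum]
  set j : Ω → Ω → ℝ := fun x y =>
    max 0 (min (A ((e x : ℕ) + 1)) (B ((e y : ℕ) + 1)) - max (A (e x)) (B (e y)))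
    with hj_def
  have hj_nonneg : ∀ x y, 0 ≤ j x y := fun x y => le_max_left _ _
  -- marginals
  have hmarg1 : ∀ x, ∑ y, j x y = a x := by
    intro x
    set c := A (e x) with hc
    set d := A ((e x : ℕ) + 1) with hd
    have hcd : c ≤ d := hA_mono (Nat.le_succ _)
    have hstep : ∀ y : Ω, j x y
        = min d (max c (B ((e y : ℕ) + 1))) - min d (max c (B (e y))) := by
      intro y
      exact fluxAux_interval_len c d (B (e y)) (B ((e y : ℕ) + 1)) hcd
        (hB_mono (Nat.le_succ _))
    calc ∑ y, j x y
        = ∑ y : Ω, ((fun k => min d (max c (B k))) ((e y : ℕ) + 1)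
            - (fun k => min d (max c (B k))) (e y)) :=
          Finset.sum_congr rfl fun y _ => hstep y
      _ = min d (max c (B n)) - min d (max c (B 0)) :=
          fluxAux_telescope e (fun k => min d (max c (B k)))
      _ = a x := by
          rw [hB0]
          have h0c : 0 ≤ c := by rw [hc, ← hA0]; exact hA_mono (Nat.zero_le _)
          have hcB : c ≤ B n := by rw [← hABtop, hc]; exact hA_mono (le_of_lt (e x).isLt)
          have hdB : d ≤ B n := by rw [← hABtop, hd]; exact hA_mono (e x).isLt
          rw [max_eq_right hcB, min_eq_left hdB, max_eq_left h0c, min_eq_right hcd]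
          rw [hd, hA_succ x, hc]; ring
  have hmarg2 : ∀ y, ∑ x, j x y = b y := by
    intro y
    set c := B (e y) with hc
    set d := B ((e y : ℕ) + 1) with hd
    have hcd : c ≤ d := hB_mono (Nat.le_succ _)
    have hstep : ∀ x : Ω, j x y
        = min d (max c (A ((e x : ℕ) + 1))) - min d (max c (A (e x))) := by
      intro x
      have h := fluxAux_interval_len c d (A (e x)) (A ((e x : ℕ) + 1)) hcd
        (hA_mono (Nat.le_succ _))
      rw [← h, hj_def]
      show (0:ℝ) ⊔ (A ((e x : ℕ) + 1) ⊓ B ((e y : ℕ) + 1) - A (e x) ⊔ B (e y)) = _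
      rw [← hd, ← hc, min_comm (A ((e x : ℕ) + 1)) d, max_comm (A (e x)) c]
    calc ∑ x, j x y
        = ∑ x : Ω, ((fun k => min d (max c (A k))) ((e x : ℕ) + 1)
            - (fun k => min d (max c (A k))) (e x)) :=
          Finset.sum_congr rfl fun x _ => hstep x
      _ = min d (max c (A n)) - min d (max c (A 0)) :=
          fluxAux_telescope e (fun k => min d (max c (A k)))
      _ = b y := by
          rw [hA0]
          have h0c : 0 ≤ c := by rw [hc, ← hB0]; exact hB_mono (Nat.zero_le _)
          have hcB : c ≤ A n := by rw [hABtop, hc]; exact hB_mono (le_of_lt (e y).isLt)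
          have hdB : d ≤ A n := by rw [hABtop, hd]; exact hB_mono (e y).isLt
          rw [max_eq_right hcB, min_eq_left hdB, max_eq_left h0c, min_eq_right hcd]
          rw [hd, hB_succ y, hc]; ring
  -- F basic properties
  have hFanti : ∀ x y u v, F x y u v = - F x y v u := by
    intro x y u v; rw [hF, hF]; ring
  have hFzero : ∀ x y u v, ¬ G.Adj u v → F x y u v = 0 := by
    intro x y u v huv
    rw [hF]
    have h1 : (γ x y).darts.filter (fun d => d.fst = u ∧ d.snd = v) = [] := by
      refine List.filter_eq_nil_iff.mpr fun d _ => ?_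
      simp only [decide_eq_true_eq, not_and]
      intro h1 h2
      exact huv (h1 ▸ h2 ▸ d.adj)
    have h2 : (γ x y).darts.filter (fun d => d.fst = v ∧ d.snd = u) = [] := by
      refine List.filter_eq_nil_iff.mpr fun d _ => ?_
      simp only [decide_eq_true_eq, not_and]
      intro h1 h2
      exact (huv ∘ G.adj_symm) (h1 ▸ h2 ▸ d.adj)
    rw [h1, h2]; simp
  have hFsum : ∀ x y u, ∑ v, F x y u v
      = (if x = u then 1 else 0) - (if y = u then 1 else 0) := by
    intro x y u
    calc ∑ v, F x y u v
        = ∑ v, ((((γ x y).darts.filter (fun d => d.fst = u ∧ d.snd = v)).length : ℝ)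
            - (((γ x y).darts.filter (fun d => d.fst = v ∧ d.snd = u)).length : ℝ)) :=
          Finset.sum_congr rfl fun v _ => hF x y u v
      _ = (((γ x y).darts.filter (fun d => d.fst = u)).length : ℝ)
            - (((γ x y).darts.filter (fun d => d.snd = u)).length : ℝ) := by
          rw [Finset.sum_sub_distrib, fluxAux_sum_filter_fst, fluxAux_sum_filter_snd]
      _ = (if x = u then 1 else 0) - (if y = u then 1 else 0) :=
          fluxAux_walk_count (γ x y) u
  refine ⟨fun u v => ∑ x, ∑ y, j x y * F x y u v, j, ?_, ?_, ?_, fun u v => rfl,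
    hj_nonneg, ?_, ?_, ?_⟩
  · -- antisymmetry
    intro u v
    rw [← Finset.sum_neg_distrib]
    refine Finset.sum_congr rfl fun x _ => ?_
    rw [← Finset.sum_neg_distrib]
    refine Finset.sum_congr rfl fun y _ => ?_
    rw [hFanti x y u v]; ring
  · -- vanishing off edges
    intro u v huv
    refine Finset.sum_eq_zero fun x _ => Finset.sum_eq_zero fun y _ => ?_
    rw [hFzero x y u v huv]; ring
  · -- divergence
    intro u
    have h1 : ∑ v, ∑ x, ∑ y, j x y * F x y u v
        = ∑ x, ∑ y, j x y * ∑ v, F x y u v := by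
      rw [Finset.sum_comm]
      refine Finset.sum_congr rfl fun x _ => ?_
      rw [Finset.sum_comm]
      refine Finset.sum_congr rfl fun y _ => ?_
      rw [Finset.mul_sum]
    rw [h1]
    have h2 : ∑ x, ∑ y, j x y * ∑ v, F x y u v
        = ∑ x, ∑ y, (j x y * (if x = u then 1 else 0)
            - j x y * (if y = u then 1 else 0)) := by
      refine Finset.sum_congr rfl fun x _ => Finset.sum_congr rfl fun y _ => ?_
      rw [hFsum]; ring
    rw [h2]
    have h3 : ∑ x : Ω, ∑ y : Ω, j x y * (if x = u then 1 else 0) = ∑ y, j u y := by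
      rw [show (fun x : Ω => ∑ y : Ω, j x y * (if x = u then 1 else 0))
          = (fun x : Ω => if x = u then ∑ y, j x y else 0) from ?_]
      · rw [Finset.sum_ite_eq' Finset.univ u (fun x => ∑ y, j x y)]
        simp
      · funext x
        split_ifs with h <;> simp [h]
    have h4 : ∑ x : Ω, ∑ y : Ω, j x y * (if y = u then 1 else 0) = ∑ x, j x u := by
      refine Finset.sum_congr rfl fun x _ => ?_
      rw [show (fun y : Ω => j x y * (if y = u then 1 else 0))
          = (fun y : Ω => if y = u then j x y else 0) from ?_]
      · rw [Finset.sum_ite_eq' Finset.univ u (fun y => j x y)]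
        simp
      · funext y
        split_ifs with h <;> simp [h]
    have h5 : ∀ x : Ω, ∑ y : Ω, (j x y * (if x = u then 1 else 0)
        - j x y * (if y = u then 1 else 0))
        = (∑ y : Ω, j x y * (if x = u then 1 else 0))
          - ∑ y : Ω, j x y * (if y = u then 1 else 0) := fun x =>
      Finset.sum_sub_distrib _ _
    rw [Finset.sum_congr rfl fun x _ => h5 x, Finset.sum_sub_distrib, h3, h4,
      hmarg1 u, hmarg2 u]
    have := hab u
    linarith
  · -- sign conditions
    intro x y hpos
    have ht : 0 < min (A ((e x : ℕ) + 1)) (B ((e y : ℕ) + 1))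
        - max (A (e x)) (B (e y)) := by
      by_contra h
      push_neg at h
      have : j x y = 0 := max_eq_left h
      linarith
    have hax : 0 < a x := by
      have h1 : A (e x) < A ((e x : ℕ) + 1) := by
        have := le_max_left (A (e x)) (B (e y))
        have := min_le_left (A ((e x : ℕ) + 1)) (B ((e y : ℕ) + 1))
        linarith
      rw [hA_succ x] at h1
      linarith
    have hby : 0 < b y := by
      have h1 : B (e y) < B ((e y : ℕ) + 1) := by
        have := le_max_right (A (e x)) (B (e y))
        have := min_le_right (A ((e x : ℕ) + 1)) (B ((e y : ℕ) + 1))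
        linarith
      rw [hB_succ y] at h1
      linarith
    constructor
    · simp only [ha_def, lt_max_iff, lt_self_iff_false, or_false] at hax
      linarith
    · simp only [hb_def, lt_max_iff, lt_self_iff_false, or_false] at hby
      exact hby
  · -- cardinality of support
    have hcard2 : (Finset.univ : Finset (Ω ⊕ Ω)).card = 2 * n := by
      simp [Fintype.card_sum, two_mul, hn]
    rw [← hcard2]
    refine Finset.card_le_card_of_injOn
      (fun p : Ω × Ω =>
        if A ((e p.1 : ℕ) + 1) ≤ B ((e p.2 : ℕ) + 1) then Sum.inl p.1 else Sum.inr p.2)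
      (fun p _ => Finset.mem_univ _) ?_
    intro p hp q hq hpq
    simp only [Finset.coe_filter, Set.mem_setOf_eq, Finset.mem_univ, true_and] at hp hq
    have hppos : 0 < j p.1 p.2 := lt_of_le_of_ne (hj_nonneg _ _) (Ne.symm hp)
    have hqpos : 0 < j q.1 q.2 := lt_of_le_of_ne (hj_nonneg _ _) (Ne.symm hq)
    have hkey : ∀ (x y : Ω), 0 < j x y →
        max (A (e x)) (B (e y)) < min (A ((e x : ℕ) + 1)) (B ((e y : ℕ) + 1)) := by
      intro x y hxy
      by_contra h
      push_neg at h
      have : j x y = 0 := max_eq_left (by linarith)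
      linarith
    have hP := hkey _ _ hppos
    have hQ := hkey _ _ hqpos
    by_cases h1 : A ((e p.1 : ℕ) + 1) ≤ B ((e p.2 : ℕ) + 1) <;>
      by_cases h2 : A ((e q.1 : ℕ) + 1) ≤ B ((e q.2 : ℕ) + 1)
    · -- both inl : p.1 = q.1, show p.2 = q.2
      simp only [h1, h2, if_true] at hpq
      have hx : p.1 = q.1 := Sum.inl.injEq _ _ ▸ (by injection hpq)
      have hy : p.2 = q.2 := by
        by_contra hne
        have hBlt1 : B (e p.2) < A ((e p.1 : ℕ) + 1) :=
          lt_of_le_of_lt (le_max_right _ _)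
            (lt_of_lt_of_le hP (min_le_left _ _))
        have hBlt2 : B (e q.2) < A ((e q.1 : ℕ) + 1) :=
          lt_of_le_of_lt (le_max_right _ _)
            (lt_of_lt_of_le hQ (min_le_left _ _))
        rcases lt_trichotomy ((e p.2 : ℕ)) ((e q.2 : ℕ)) with hlt | heq | hlt
        · have hstep : B ((e p.2 : ℕ) + 1) ≤ B (e q.2) := hB_mono hlt
          rw [← hx] at hBlt2
          linarith
        · exact hne (e.injective (Fin.val_injective heq))
        · have hstep : B ((e q.2 : ℕ) + 1) ≤ B (e p.2) := hB_mono hlt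
          rw [hx] at hBlt1
          linarith
      exact Prod.ext hx hy
    · simp only [h1, h2, if_true, if_false] at hpq
      exact absurd hpq (by simp)
    · simp only [h1, h2, if_true, if_false] at hpq
      exact absurd hpq (by simp)
    · -- both inr : p.2 = q.2, show p.1 = q.1
      simp only [h1, h2, if_false] at hpq
      have hy : p.2 = q.2 := Sum.inr.injEq _ _ ▸ (by injection hpq)
      push_neg at h1 h2
      have hx : p.1 = q.1 := by
        by_contra hne
        have hAlt1 : A (e p.1) < B ((e p.2 : ℕ) + 1) :=
          lt_of_le_of_lt (le_max_left _ _)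
            (lt_of_lt_of_le hP (min_le_right _ _))
        have hAlt2 : A (e q.1) < B ((e q.2 : ℕ) + 1) :=
          lt_of_le_of_lt (le_max_left _ _)
            (lt_of_lt_of_le hQ (min_le_right _ _))
        rcases lt_trichotomy ((e p.1 : ℕ)) ((e q.1 : ℕ)) with hlt | heq | hlt
        · have hstep : A ((e p.1 : ℕ) + 1) ≤ A (e q.1) := hA_mono hlt
          rw [← hy] at hAlt2
          linarith
        · exact hne (e.injective (Fin.val_injective heq))
        · have hstep : A ((e q.1 : ℕ) + 1) ≤ A (e p.1) := hA_mono hlt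
          rw [hy] at hAlt1
          linarith
      exact Prod.ext hx hy
  · -- bound by min
    intro x y
    have h1 : j x y ≤ a x := by
      have h := min_le_left (A ((e x : ℕ) + 1)) (B ((e y : ℕ) + 1))
      have h' := le_max_left (A (e x)) (B (e y))
      have hs := hA_succ x
      exact max_le (ha x) (by linarith)
    have h2 : j x y ≤ b y := by
      have h := min_le_right (A ((e x : ℕ) + 1)) (B ((e y : ℕ) + 1))
      have h' := le_max_right (A (e x)) (B (e y))
      have hs := hB_succ y
      exact max_le (hb y) (by linarith)
    have ha_abs : a x ≤ |D x| := by
      rw [ha_def]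
      exact max_le (neg_le_abs _) (abs_nonneg _)
    have hb_abs : b y ≤ |D y| := by
      rw [hb_def]
      exact max_le (le_abs_self _) (abs_nonneg _)
    exact le_min (le_trans h1 ha_abs) (le_trans h2 hb_abs)
end

section
/- Let q ≥ 2 and n ≥ 1 be integers and ε₀ ∈ (0,1). Let Ω = [q]ⁿ and let μ_{β₀} be the mean-field Potts measure μ_{β₀}(σ) = exp((β₀/n)·Σ_{i,j∈[n]} 1[σᵢ = σⱼ]) / Z with Z the normalizing constant. Let Ω₀ = {(a, a, …, a) ∈ [q]ⁿ : a ∈ [q]} be the set of monochromatic configurations, and define the probability measure ν = (ε₀/2)·Unif(Ω) + (1 − ε₀/2)·Unif(Ω₀), i.e. ν(σ) = (ε₀/2)·q^{−n} + (1 − ε₀/2)·(1/q)·1[σ ∈ Ω₀]. If β₀ ≥ n·log q + log(2/ε₀), then KL(μ_{β₀} ‖ ν) < ε₀, where KL(μ ‖ ν) = Σ_{σ∈Ω} μ(σ)·log(μ(σ)/ν(σ)). -/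
open Finset

/-- At an extremely low temperature `β₀ ≥ n·log q + log(2/ε₀)`, the mean-field
Potts measure is within KL divergence `ε₀` of the mixture of the uniform measure
on all configurations (weight `ε₀/2`) and the uniform measure on monochromatic
configurations. -/
theorem potts_low_temperature_initialization (q n : ℕ) (hq : 2 ≤ q) (hn : 1 ≤ n)
    (ε₀ : ℝ) (hε : ε₀ ∈ Set.Ioo (0 : ℝ) 1)
    (β₀ : ℝ)
    (μ : (Fin n → Fin q) → ℝ)
    (hμ : ∀ σ, μ σ =
      Real.exp ((β₀ / n) * ∑ i, ∑ j, if σ i = σ j then (1 : ℝ) else 0) /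
      ∑ τ : Fin n → Fin q,
        Real.exp ((β₀ / n) * ∑ i, ∑ j, if τ i = τ j then (1 : ℝ) else 0))
    (ν : (Fin n → Fin q) → ℝ)
    (hν : ∀ σ, ν σ = (ε₀ / 2) / (q : ℝ) ^ n +
      (1 - ε₀ / 2) * (1 / q) * (if ∃ a, ∀ i, σ i = a then (1 : ℝ) else 0))
    (hβ₀ : (n : ℝ) * Real.log q + Real.log (2 / ε₀) ≤ β₀) :
    ∑ σ : Fin n → Fin q, μ σ * Real.log (μ σ / ν σ) < ε₀ := by
  obtain ⟨hε0, hε1⟩ := hε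
  haveI : Nonempty (Fin q) := ⟨⟨0, by omega⟩⟩
  haveI : Nonempty (Fin n) := ⟨⟨0, by omega⟩⟩
  have hnR : (1:ℝ) ≤ n := by exact_mod_cast hn
  have hqR : (2:ℝ) ≤ q := by exact_mod_cast hq
  have hq0 : (0:ℝ) < q := by linarith
  set E : (Fin n → Fin q) → ℝ :=
    fun σ => ∑ i, ∑ j, if σ i = σ j then (1:ℝ) else 0 with hE
  set Z : ℝ := ∑ τ : Fin n → Fin q, Real.exp ((β₀ / n) * E τ) with hZ
  have hμ' : ∀ σ, μ σ = Real.exp ((β₀ / n) * E σ) / Z := hμ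
  have hZpos : 0 < Z :=
    Finset.sum_pos (fun τ _ => Real.exp_pos _) univ_nonempty
  have hlogq : 0 ≤ Real.log q := Real.log_nonneg (by linarith)
  have hlog2ε : 0 < Real.log (2/ε₀) :=
    Real.log_pos (by rw [lt_div_iff₀ hε0]; linarith)
  have hβpos : 0 < β₀ := by
    have : 0 ≤ (n:ℝ) * Real.log q := by positivity
    linarith
  -- energy of monochromatic configuration
  have hEmono : ∀ σ : Fin n → Fin q, (∀ i j, σ i = σ j) → E σ = (n:ℝ) * n := by
    intro σ hσ
    simp only [hE]
    rw [Finset.sum_congr rfl (fun i _ => Finset.sum_congr rfl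
      (fun j _ => if_pos (hσ i j)))]
    simp
  have hexpmono : ∀ σ : Fin n → Fin q, (∀ i j, σ i = σ j) →
      Real.exp ((β₀ / n) * E σ) = Real.exp (β₀ * n) := by
    intro σ hσ
    rw [hEmono σ hσ]
    congr 1
    have hn0 : (n:ℝ) ≠ 0 := by linarith
    field_simp
  -- lower bound on Z
  have hZge : (q:ℝ) * Real.exp (β₀ * n) ≤ Z := by
    have hinj : Function.Injective (fun a : Fin q => (fun _ : Fin n => a)) := by
      intro a b hab
      exact congrFun hab ⟨0, by omega⟩
    have hsub : (univ.image (fun a : Fin q => (fun _ : Fin n => a))) ⊆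
        (univ : Finset (Fin n → Fin q)) := Finset.subset_univ _
    calc (q:ℝ) * Real.exp (β₀ * n)
        = ∑ a : Fin q, Real.exp (β₀ * n) := by
          rw [Finset.sum_const]; simp [mul_comm]
      _ = ∑ σ ∈ univ.image (fun a : Fin q => (fun _ : Fin n => a)),
            Real.exp ((β₀ / n) * E σ) := by
          rw [Finset.sum_image (fun a _ b _ h => hinj h)]
          exact Finset.sum_congr rfl (fun a _ =>
            (hexpmono (fun _ => a) (fun i j => rfl)).symm)
      _ ≤ Z := Finset.sum_le_sum_of_subset_of_nonneg hsub
          (fun σ _ _ => (Real.exp_pos _).le)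
  -- energy bound for non-monochromatic configurations
  have hEnon : ∀ σ : Fin n → Fin q, (¬ ∃ a, ∀ i, σ i = a) →
      E σ ≤ (n:ℝ) * ((n:ℝ) - 1) := by
    intro σ hσ
    have hi : ∀ i : Fin n,
        (∑ j, if σ i = σ j then (1:ℝ) else 0) ≤ (n:ℝ) - 1 := by
      intro i
      have hne : (univ.filter (fun j => σ i = σ j)) ≠ univ := by
        intro h
        refine hσ ⟨σ i, fun j => ?_⟩
        have : j ∈ univ.filter (fun j => σ i = σ j) := by
          rw [h]; exact Finset.mem_univ j
        exact ((Finset.mem_filter.mp this).2).symm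
      have hlt : (univ.filter (fun j => σ i = σ j)).card < n := by
        have := Finset.card_lt_card
          (Finset.ssubset_iff_subset_ne.mpr ⟨Finset.filter_subset _ _, hne⟩)
        simpa using this
      have hc : ((univ.filter (fun j => σ i = σ j)).card : ℝ) + 1 ≤ (n:ℝ) := by
        exact_mod_cast hlt
      calc (∑ j, if σ i = σ j then (1:ℝ) else 0)
          = ((univ.filter (fun j => σ i = σ j)).card : ℝ) := by
            rw [Finset.sum_boole]
        _ ≤ (n:ℝ) - 1 := by linarith
    calc E σ ≤ ∑ _i : Fin n, ((n:ℝ) - 1) :=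
          Finset.sum_le_sum (fun i _ => hi i)
      _ = (n:ℝ) * ((n:ℝ) - 1) := by rw [Finset.sum_const]; simp [mul_comm]
  -- basic positivity
  have hμpos : ∀ σ, 0 < μ σ := by
    intro σ; rw [hμ' σ]; positivity
  have hνpos : ∀ σ, 0 < ν σ := by
    intro σ; rw [hν σ]
    have h1 : 0 < (ε₀ / 2) / (q : ℝ) ^ n := by positivity
    have h2 : 0 ≤ (1 - ε₀ / 2) * (1 / (q:ℝ)) *
        (if ∃ a, ∀ i, σ i = a then (1 : ℝ) else 0) := by
      have : (0:ℝ) ≤ 1 - ε₀/2 := by linarith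
      positivity
    linarith
  -- sum of μ is 1
  have hμsum : ∑ σ : Fin n → Fin q, μ σ = 1 := by
    rw [Finset.sum_congr rfl (fun σ _ => hμ' σ), ← Finset.sum_div, ← hZ,
      div_self (ne_of_gt hZpos)]
  -- the constant L
  set L : ℝ := Real.log (1 / (1 - ε₀/2)) with hL
  have hhalf : (0:ℝ) < 1 - ε₀/2 := by linarith
  have hLnonneg : 0 ≤ L := by
    apply Real.log_nonneg
    rw [le_div_iff₀ hhalf]; linarith
  have hLlt : L < ε₀ := by
    have h1 : (1:ℝ)/(1 - ε₀/2) ≠ 1 := by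
      intro h
      rw [div_eq_one_iff_eq (ne_of_gt hhalf)] at h
      linarith
    have h2 := Real.log_lt_sub_one_of_pos (by positivity) h1
    have h3 : (1:ℝ)/(1 - ε₀/2) - 1 = (ε₀/2)/(1 - ε₀/2) := by
      rw [div_sub_one (ne_of_gt hhalf)]
      congr 1
      ring
    have h4 : (ε₀/2)/(1 - ε₀/2) < ε₀ := by
      rw [div_lt_iff₀ hhalf]; nlinarith
    rw [hL]; linarith [h2, h3 ▸ h2]
  -- per-term bound
  have key : ∀ σ : Fin n → Fin q, μ σ * Real.log (μ σ / ν σ) ≤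
      if ∃ a, ∀ i, σ i = a then μ σ * L else 0 := by
    intro σ
    by_cases hmono : ∃ a, ∀ i, σ i = a
    · rw [if_pos hmono]
      obtain ⟨a, ha⟩ := hmono
      have hμle : μ σ ≤ 1 / q := by
        rw [hμ' σ, hexpmono σ (fun i j => (ha i).trans (ha j).symm)]
        rw [div_le_div_iff₀ hZpos hq0]
        calc Real.exp (β₀ * n) * q = q * Real.exp (β₀ * n) := by ring
          _ ≤ Z := hZge
          _ = 1 * Z := (one_mul Z).symm
      have hνge : (1 - ε₀/2) / q ≤ ν σ := by
        rw [hν σ, if_pos ⟨a, ha⟩]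
        have h1 : 0 < (ε₀ / 2) / (q : ℝ) ^ n := by positivity
        have : (1 - ε₀ / 2) * (1 / (q:ℝ)) * 1 = (1 - ε₀/2) / q := by ring
        rw [this]; linarith
      have hratio : μ σ / ν σ ≤ 1 / (1 - ε₀/2) := by
        have := div_le_div₀ (by positivity : (0:ℝ) ≤ 1/q) hμle
          (by positivity : (0:ℝ) < (1 - ε₀/2)/q) hνge
        calc μ σ / ν σ ≤ (1/q) / ((1 - ε₀/2)/q) := this
          _ = 1 / (1 - ε₀/2) := by
            rw [div_div_div_eq]
            rw [mul_comm, mul_div_mul_left _ _ (ne_of_gt hq0)]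
      have hlog : Real.log (μ σ / ν σ) ≤ L := by
        rw [hL]
        exact Real.log_le_log (div_pos (hμpos σ) (hνpos σ)) hratio
      exact mul_le_mul_of_nonneg_left hlog (hμpos σ).le
    · rw [if_neg hmono]
      have hμle : μ σ ≤ ν σ := by
        have h1 : μ σ ≤ Real.exp (-β₀) / q := by
          rw [hμ' σ]
          have hexple : Real.exp ((β₀/n) * E σ) ≤ Real.exp (β₀ * ((n:ℝ) - 1)) := by
            apply Real.exp_le_exp.mpr
            have hEb := hEnon σ hmono
            have hn0 : (n:ℝ) ≠ 0 := by linarith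
            calc (β₀/n) * E σ ≤ (β₀/n) * ((n:ℝ) * ((n:ℝ) - 1)) := by
                  apply mul_le_mul_of_nonneg_left hEb
                  positivity
              _ = β₀ * ((n:ℝ) - 1) := by field_simp
          calc Real.exp ((β₀/n) * E σ) / Z
              ≤ Real.exp (β₀ * ((n:ℝ) - 1)) / ((q:ℝ) * Real.exp (β₀ * n)) := by
                apply div_le_div₀ (Real.exp_pos _).le hexple (by positivity) hZge
            _ = Real.exp (-β₀) / q := by
                rw [div_mul_eq_div_div_swap, ← Real.exp_sub]
                congr 2
                ring
        have h2 : Real.exp (-β₀) / q ≤ (ε₀/2) / (q:ℝ)^n := by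
          rw [div_le_div_iff₀ hq0 (by positivity)]
          have hexpβ : (q:ℝ)^n * (2/ε₀) ≤ Real.exp β₀ := by
            calc (q:ℝ)^n * (2/ε₀)
                = Real.exp ((n:ℝ) * Real.log q) * Real.exp (Real.log (2/ε₀)) := by
                  rw [Real.exp_log (by positivity : (0:ℝ) < 2/ε₀)]
                  congr 1
                  rw [← Real.log_pow, Real.exp_log (by positivity)]
              _ = Real.exp ((n:ℝ) * Real.log q + Real.log (2/ε₀)) := by
                  rw [← Real.exp_add]
              _ ≤ Real.exp β₀ := Real.exp_le_exp.mpr hβ₀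
          have hexpinv : Real.exp (-β₀) * (q:ℝ)^n ≤ ε₀/2 := by
            rw [Real.exp_neg]
            rw [inv_mul_le_iff₀ (Real.exp_pos _)]
            calc (q:ℝ)^n = (ε₀/2) * ((q:ℝ)^n * (2/ε₀)) := by
                  field_simp
              _ ≤ (ε₀/2) * Real.exp β₀ := by
                  apply mul_le_mul_of_nonneg_left hexpβ (by positivity)
              _ = Real.exp β₀ * (ε₀/2) := by ring
          calc Real.exp (-β₀) * (q:ℝ)^n ≤ ε₀/2 := hexpinv
            _ ≤ (ε₀/2) * q := by nlinarith
        have h3 : (ε₀/2) / (q:ℝ)^n ≤ ν σ := by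
          rw [hν σ]
          have : (0:ℝ) ≤ (1 - ε₀ / 2) * (1 / (q:ℝ)) *
              (if ∃ a, ∀ i, σ i = a then (1 : ℝ) else 0) := by
            have : (0:ℝ) ≤ 1 - ε₀/2 := by linarith
            positivity
          linarith
        linarith
      have hlog : Real.log (μ σ / ν σ) ≤ 0 :=
        Real.log_nonpos (div_pos (hμpos σ) (hνpos σ)).le
          ((div_le_one (hνpos σ)).mpr hμle)
      exact mul_nonpos_of_nonneg_of_nonpos (hμpos σ).le hlog
  -- combine
  calc ∑ σ : Fin n → Fin q, μ σ * Real.log (μ σ / ν σ)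
      ≤ ∑ σ : Fin n → Fin q, (if ∃ a, ∀ i, σ i = a then μ σ * L else 0) :=
        Finset.sum_le_sum (fun σ _ => key σ)
    _ = ∑ σ ∈ univ.filter (fun σ : Fin n → Fin q => ∃ a, ∀ i, σ i = a),
          μ σ * L := by rw [Finset.sum_filter]
    _ = (∑ σ ∈ univ.filter (fun σ : Fin n → Fin q => ∃ a, ∀ i, σ i = a),
          μ σ) * L := by rw [Finset.sum_mul]
    _ ≤ 1 * L := by
        apply mul_le_mul_of_nonneg_right _ hLnonneg
        rw [← hμsum]
        exact Finset.sum_le_sum_of_subset_of_nonneg (Finset.filter_subset _ _)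
          (fun σ _ _ => (hμpos σ).le)
    _ = L := one_mul L
    _ < ε₀ := hLlt
end
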